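/- In any algebra satisfying (B1)–(B10), with ∼x := (x ∨ ¬x) ∧ ∼̇x and ∇x := ¬¬x, the identity ∼x ∨ ∇x = 1 holds for all x. -/
import Mathlib


theorem stmt {A : Type*} [DistribLattice A] [BoundedOrder A]
    (n s : A → A)
    (B1 : ∀ x : A, x ⊓ n x = ⊥)
    (B2 : ∀ x : A, x ⊔ s x = ⊤)
    (B3 : ∀ x : A, n x ⊓ s (n x) = ⊥)
    (B4 : ∀ x : A, s x ⊔ n (s x) = ⊤)
    (B5 : ∀ x y : A, s (x ⊓ y) = s x ⊔ s y)
    (B6 : ∀ x y : A, n (x ⊔ y) = n x ⊓ n y)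
    (B7 : ∀ x y : A, n (x ⊓ n y) = n x ⊔ n (n y))
    (B8 : ∀ x y : A, s (x ⊔ s y) = s x ⊓ s (s y))
    (B9 : ∀ x y : A, (x ⊔ y) ⊓ s (x ⊔ y) ≤ x ⊔ n x)
    (B10 : ∀ x y : A, x ⊓ s x ⊓ y ⊓ s y ≤ s (x ⊔ y))
    (m : A → A) (hm : ∀ x : A, m x = (x ⊔ n x) ⊓ s x)
    (d : A → A) (hd : ∀ x : A, d x = n (n x)) :
    ∀ x : A, m x ⊔ d x = ⊤ := by
  -- n is antitone-ish: n z ≤ n ⊥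
  have hanti : ∀ a b : A, a ≤ b → n b ≤ n a := by
    intro a b hab
    have h := B6 a b
    rw [sup_eq_right.mpr hab] at h
    rw [h]; exact inf_le_left
  have hnx_le_sx : ∀ z : A, n z ≤ s z := by
    intro z
    calc n z = n z ⊓ (z ⊔ s z) := by rw [B2 z, inf_top_eq]
      _ = (n z ⊓ z) ⊔ (n z ⊓ s z) := inf_sup_left _ _ _
      _ = n z ⊓ s z := by rw [inf_comm (n z) z, B1, bot_sup_eq]
      _ ≤ s z := inf_le_right
  -- n ⊥ = ⊤
  have hnbot : n ⊥ = ⊤ := by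
    set q := s (n ⊥) with hq
    have h1 : n ⊥ ⊓ q = ⊥ := B3 ⊥
    have h2 : n ⊥ ⊔ q = ⊤ := B2 (n ⊥)
    have h3 : s q ⊔ n ⊥ = ⊤ := by
      have h4 := B4 q
      have h5 : s q ⊔ n (s q) ≤ s q ⊔ n ⊥ :=
        sup_le_sup_left (hanti ⊥ (s q) bot_le) _
      rw [h4] at h5
      exact top_le_iff.mp h5
    have h6 : q ⊓ s q ≤ n ⊥ := by
      have h7 := B9 ⊥ q
      rw [bot_sup_eq, bot_sup_eq] at h7
      exact h7
    have hq_le : q ≤ n ⊥ := by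
      calc q = q ⊓ (s q ⊔ n ⊥) := by rw [h3, inf_top_eq]
        _ = (q ⊓ s q) ⊔ (q ⊓ n ⊥) := inf_sup_left _ _ _
        _ = q ⊓ s q := by rw [inf_comm q (n ⊥), h1, sup_bot_eq]
        _ ≤ n ⊥ := h6
    have hqbot : q = ⊥ := by
      have : q = n ⊥ ⊓ q := (inf_eq_right.mpr hq_le).symm
      rw [this, h1]
    rw [hqbot, sup_bot_eq] at h2
    exact h2
  -- n x ⊔ n (n x) = ⊤
  have hnn : ∀ z : A, n z ⊔ n (n z) = ⊤ := by
    intro z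
    have h := B7 z z
    rw [B1 z, hnbot] at h
    exact h.symm
  intro x
  have h5 : s x ⊔ n (n x) = ⊤ := by
    have h := B4 x
    have h' : s x ⊔ n (s x) ≤ s x ⊔ n (n x) :=
      sup_le_sup_left (hanti (n x) (s x) (hnx_le_sx x)) _
    rw [h] at h'
    exact top_le_iff.mp h'
  have h6 : (x ⊔ n x) ⊔ n (n x) = ⊤ := by
    have : n x ⊔ n (n x) ≤ (x ⊔ n x) ⊔ n (n x) :=
      sup_le_sup_right le_sup_right _
    rw [hnn x] at this
    exact top_le_iff.mp this
  rw [hm, hd, sup_inf_right, h6, h5, inf_top_eq]
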